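/- arXiv:2209.08856 — 6 statements merged into one kernel-verified Lean document; each statement's English description precedes it below -/
import Mathlib

section
/- Let s be a scoring system. For every ranking profile P over a finite candidate set C and every ranking ≻ of C, we have ≻ ∈ Sequential-s-Winner(P) if and only if rev(≻) ∈ Sequential-s*-Loser(rev(P)). -/
open Finset

/-- A scoring system: for each number `m` of candidates, `s m i` is the score awarded
to the candidate in (1-indexed) position `i`. -/
abbrev ScoringSystem : Type := ℕ → ℕ → ℝ

variable {α : Type*}

/-- A ranking of the finite candidate set `C`: a duplicate-free list consisting of
exactly the candidates of `C`, earlier in the list meaning more preferred. -/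
def IsRanking [DecidableEq α] (C : Finset α) (r : List α) : Prop :=
  r.Nodup ∧ r.toFinset = C

/-- A ranking profile over `C`: a finite list of rankings of `C`. -/
def IsProfile [DecidableEq α] (C : Finset α) (P : List (List α)) : Prop :=
  ∀ r ∈ P, IsRanking C r

/-- The (1-indexed) position of candidate `c` in ranking `r`. -/
def rpos [DecidableEq α] (r : List α) (c : α) : ℕ :=
  r.idxOf c + 1

/-- The `s`-score of candidate `c` in the profile `P` over candidate set `C`. -/
def scoreOf [DecidableEq α] (s : ScoringSystem) (C : Finset α)
    (P : List (List α)) (c : α) : ℝ :=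
  (P.map fun r => s C.card (rpos r c)).sum

/-- `c` is an `s`-winner of `P` (a candidate of maximum `s`-score). -/
def IsWinner [DecidableEq α] (s : ScoringSystem) (C : Finset α)
    (P : List (List α)) (c : α) : Prop :=
  c ∈ C ∧ ∀ d ∈ C, scoreOf s C P d ≤ scoreOf s C P c

/-- `c` is an `s`-loser of `P` (a candidate of minimum `s`-score). -/
def IsLoser [DecidableEq α] (s : ScoringSystem) (C : Finset α)
    (P : List (List α)) (c : α) : Prop :=
  c ∈ C ∧ ∀ d ∈ C, scoreOf s C P c ≤ scoreOf s C P d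

/-- Restriction of a profile to the candidate subset `C'`. -/
def restrictProfile [DecidableEq α] (C' : Finset α) (P : List (List α)) :
    List (List α) :=
  P.map fun r => r.filter (fun x => decide (x ∈ C'))

/-- Auxiliary recursion for Sequential-`s`-Winner, consuming the ranking from the top. -/
def SeqWinnerSel [DecidableEq α] (s : ScoringSystem) :
    List α → Finset α → List (List α) → Prop
  | [], C, _ => C = ∅
  | c :: rest, C, P =>
      IsWinner s C P c ∧
        SeqWinnerSel s rest (C.erase c) (restrictProfile (C.erase c) P)

/-- `SeqWinner s C P r` means that the ranking `r` belongs to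
`Sequential-s-Winner(P)` for the profile `P` over candidate set `C`. -/
def SeqWinner [DecidableEq α] (s : ScoringSystem) (C : Finset α)
    (P : List (List α)) (r : List α) : Prop :=
  SeqWinnerSel s r C P

/-- Auxiliary recursion for Sequential-`s`-Loser, consuming the ranking from the bottom. -/
def SeqLoserSel [DecidableEq α] (s : ScoringSystem) :
    List α → Finset α → List (List α) → Prop
  | [], C, _ => C = ∅
  | c :: rest, C, P =>
      IsLoser s C P c ∧
        SeqLoserSel s rest (C.erase c) (restrictProfile (C.erase c) P)

/-- `SeqLoser s C P r` means that the ranking `r` belongs to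
`Sequential-s-Loser(P)` for the profile `P` over candidate set `C`. -/
def SeqLoser [DecidableEq α] (s : ScoringSystem) (C : Finset α)
    (P : List (List α)) (r : List α) : Prop :=
  SeqLoserSel s r.reverse C P

/-- The scoring system `s*`: `(s*)^(m)_i = -(s^(m)_{m-i+1})`. -/
def dualSystem (s : ScoringSystem) : ScoringSystem :=
  fun m i => -(s m (m - i + 1))

/-- Reverse every ranking of a profile. -/
def revProfile (P : List (List α)) : List (List α) :=
  P.map List.reverse


lemma indexOf_reverse [DecidableEq α] {l : List α} (hn : l.Nodup) {c : α} (hc : c ∈ l) :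
    l.reverse.idxOf c = l.length - 1 - l.idxOf c := by
  have hi : l.idxOf c < l.length := List.idxOf_lt_length_iff.2 hc
  have h1 : l.length - 1 - l.idxOf c < l.reverse.length := by
    simp; omega
  have h2 : l.reverse[l.length - 1 - l.idxOf c] = c := by
    rw [List.getElem_reverse]
    have : l.length - 1 - (l.length - 1 - l.idxOf c) = l.idxOf c := by omega
    simp only [this]
    exact List.getElem_idxOf hi
  have := List.Nodup.idxOf_getElem (List.nodup_reverse.2 hn) (l.length - 1 - l.idxOf c) h1
  rw [h2] at this
  exact this

lemma score_dual [DecidableEq α] (s : ScoringSystem) (C : Finset α)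
    (P : List (List α)) (hP : IsProfile C P) {c : α} (hc : c ∈ C) :
    scoreOf (dualSystem s) C (revProfile P) c = -(scoreOf s C P c) := by
  unfold scoreOf revProfile
  rw [List.map_map]
  have hfun : ∀ r ∈ P, ((fun r => dualSystem s C.card (rpos r c)) ∘ List.reverse) r
      = -(s C.card (rpos r c)) := by
    intro r hr
    obtain ⟨hn, hts⟩ := hP r hr
    have hcr : c ∈ r := by rw [← List.mem_toFinset, hts]; exact hc
    have hlen : r.length = C.card := by
      rw [← hts, List.toFinset_card_of_nodup hn]
    have hi : r.idxOf c < r.length := List.idxOf_lt_length_iff.2 hcr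
    simp only [Function.comp, dualSystem, rpos, indexOf_reverse hn hcr]
    congr 2
    omega
  rw [List.map_congr_left hfun]
  induction P with
  | nil => simp
  | cons h t ih =>
    simp only [List.map_cons, List.sum_cons, neg_add]
    rw [ih (fun r hr => hP r (List.mem_cons_of_mem _ hr))
      (fun r hr => hfun r (List.mem_cons_of_mem _ hr))]

lemma restrict_rev [DecidableEq α] (C' : Finset α) (P : List (List α)) :
    restrictProfile C' (revProfile P) = revProfile (restrictProfile C' P) := by
  unfold restrictProfile revProfile
  simp [List.map_map, Function.comp, List.filter_reverse]

lemma profile_restrict [DecidableEq α] {C C' : Finset α} {P : List (List α)}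
    (hsub : C' ⊆ C) (hP : IsProfile C P) :
    IsProfile C' (restrictProfile C' P) := by
  intro r hr
  simp only [restrictProfile, List.mem_map] at hr
  obtain ⟨q, hq, rfl⟩ := hr
  obtain ⟨hn, hts⟩ := hP q hq
  refine ⟨hn.filter _, ?_⟩
  ext x
  simp only [List.toFinset_filter, Finset.mem_filter, List.mem_toFinset, hts,
    decide_eq_true_eq]
  refine ⟨fun ⟨_, h⟩ => h, fun h => ⟨hsub h, h⟩⟩

lemma main_lemma [DecidableEq α] (s : ScoringSystem) :
    ∀ (r : List α) (C : Finset α) (P : List (List α)), IsProfile C P → IsRanking C r →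
      (SeqWinnerSel s r C P ↔ SeqLoserSel (dualSystem s) r C (revProfile P)) := by
  intro r
  induction r with
  | nil => intro C P _ _; exact Iff.rfl
  | cons c rest ih =>
    intro C P hP hr
    obtain ⟨hn, hts⟩ := hr
    have hc : c ∈ C := by rw [← hts]; simp
    have hrest : IsRanking (C.erase c) rest := by
      refine ⟨(List.nodup_cons.1 hn).2, ?_⟩
      rw [← hts]
      ext x
      simp only [Finset.mem_erase, List.mem_toFinset, List.toFinset_cons,
        Finset.mem_insert]
      constructor
      · intro hx
        refine ⟨fun h => (List.nodup_cons.1 hn).1 (h ▸ hx), Or.inr hx⟩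
      · rintro ⟨hne, h | hx⟩
        · exact absurd h hne
        · exact hx
    have hP' : IsProfile (C.erase c) (restrictProfile (C.erase c) P) :=
      profile_restrict (Finset.erase_subset _ _) hP
    have hwin : IsWinner s C P c ↔ IsLoser (dualSystem s) C (revProfile P) c := by
      unfold IsWinner IsLoser
      constructor
      · rintro ⟨_, h⟩
        exact ⟨hc, fun d hd => by
          rw [score_dual s C P hP hc, score_dual s C P hP hd]
          exact neg_le_neg (h d hd)⟩
      · rintro ⟨_, h⟩
        refine ⟨hc, fun d hd => ?_⟩
        have := h d hd
        rw [score_dual s C P hP hc, score_dual s C P hP hd] at this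
        linarith
    simp only [SeqWinnerSel, SeqLoserSel, hwin, restrict_rev]
    exact and_congr Iff.rfl (ih (C.erase c) _ hP' hrest)

/-- Lemma 1 of the paper.
`≻ ∈ Sequential-s-Winner(P)` iff `rev(≻) ∈ Sequential-s*-Loser(rev(P))`. -/
theorem seqWinner_iff_seqLoser_rev [DecidableEq α] (s : ScoringSystem)
    (C : Finset α) (P : List (List α)) (hP : IsProfile C P)
    (r : List α) (hr : IsRanking C r) :
    SeqWinner s C P r ↔ SeqLoser (dualSystem s) C (revProfile P) r.reverse := by
  unfold SeqWinner SeqLoser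
  rw [List.reverse_reverse]
  exact main_lemma s r C P hP hr
end

section
/- For every scoring system s, Sequential-s-Winner satisfies reinforcement at the top: for all ranking profiles P and P' over the same finite candidate set C, if the intersection of the set of candidates ranked first in some ranking of Sequential-s-Winner(P) with the set of candidates ranked first in some ranking of Sequential-s-Winner(P') is nonempty, then the set of candidates ranked first in some ranking of Sequential-s-Winner(P + P') equals this intersection, where P + P' denotes the concatenation of the two profiles. -/
open Finset

variable {α : Type*}

lemma exists_seqSel [DecidableEq α] (s : ScoringSystem) (C : Finset α) :
    ∀ (P : List (List α)), ∃ r, SeqWinnerSel s r C P := by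
  induction C using Finset.strongInduction with
  | _ C ih =>
    intro P
    rcases C.eq_empty_or_nonempty with h | h
    · exact ⟨[], h⟩
    · obtain ⟨c, hc, hmax⟩ := C.exists_max_image (scoreOf s C P) h
      obtain ⟨r, hr⟩ := ih (C.erase c) (Finset.erase_ssubset hc) _
      exact ⟨c :: r, ⟨hc, hmax⟩, hr⟩

lemma head_set_eq [DecidableEq α] (s : ScoringSystem) (C : Finset α)
    (P : List (List α)) :
    {c | ∃ r, SeqWinner s C P r ∧ r.head? = some c} = {c | IsWinner s C P c} := by
  ext c
  constructor
  · rintro ⟨r, hr, hh⟩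
    cases r with
    | nil => simp at hh
    | cons a rest =>
      simp only [List.head?_cons, Option.some.injEq] at hh
      subst hh
      exact hr.1
  · intro hc
    obtain ⟨r, hr⟩ := exists_seqSel s (C.erase c) (restrictProfile (C.erase c) P)
    exact ⟨c :: r, ⟨hc, hr⟩, rfl⟩

lemma scoreOf_append [DecidableEq α] (s : ScoringSystem) (C : Finset α)
    (P P' : List (List α)) (c : α) :
    scoreOf s C (P ++ P') c = scoreOf s C P c + scoreOf s C P' c := by
  simp [scoreOf]

/-- Sequential-`s`-Winner satisfies reinforcement at the top:
if some candidate can be ranked first on both `P` and `P'`, then the set of candidates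
that can be ranked first on the concatenated profile `P ++ P'` is exactly the
intersection of the two such sets. -/
theorem seqWinner_reinforcement_at_top [DecidableEq α] (s : ScoringSystem)
    (C : Finset α) (P P' : List (List α))
    (hP : IsProfile C P) (hP' : IsProfile C P')
    (hne : ({c | ∃ r, SeqWinner s C P r ∧ r.head? = some c} ∩
      {c | ∃ r, SeqWinner s C P' r ∧ r.head? = some c}).Nonempty) :
    {c | ∃ r, SeqWinner s C (P ++ P') r ∧ r.head? = some c} =
      {c | ∃ r, SeqWinner s C P r ∧ r.head? = some c} ∩
        {c | ∃ r, SeqWinner s C P' r ∧ r.head? = some c} := by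
  simp only [head_set_eq] at hne ⊢
  obtain ⟨w, hw1, hw2⟩ := hne
  replace hw1 : IsWinner s C P w := hw1
  replace hw2 : IsWinner s C P' w := hw2
  ext c
  simp only [Set.mem_inter_iff, Set.mem_setOf_eq]
  constructor
  · rintro ⟨hc, hmax⟩
    have hw := hmax w hw1.1
    have h1 := hw1.2 c hc
    have h2 := hw2.2 c hc
    rw [scoreOf_append, scoreOf_append] at hw
    have e1 : scoreOf s C P c = scoreOf s C P w := le_antisymm h1 (by linarith)
    have e2 : scoreOf s C P' c = scoreOf s C P' w := le_antisymm h2 (by linarith)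
    exact ⟨⟨hc, fun d hd => e1 ▸ hw1.2 d hd⟩, ⟨hc, fun d hd => e2 ▸ hw2.2 d hd⟩⟩
  · rintro ⟨⟨hc, h1⟩, ⟨_, h2⟩⟩
    refine ⟨hc, fun d hd => ?_⟩
    rw [scoreOf_append, scoreOf_append]
    exact add_le_add (h1 d hd) (h2 d hd)
end

section
/- For every scoring system s, the rule Score-s satisfies reinforcement: for all ranking profiles P and P' over the same finite candidate set C, if Score-s(P) ∩ Score-s(P') is nonempty, then Score-s(P + P') = Score-s(P) ∩ Score-s(P'), where P + P' denotes the concatenation of the two profiles. -/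
open Finset

variable {α : Type*}

/-- The rule Score-`s`: a ranking is selected iff whenever `c` has a strictly larger
`s`-score than `d`, `c` is ranked above `d`. -/
def ScoreSel [DecidableEq α] (s : ScoringSystem) (C : Finset α)
    (P : List (List α)) (r : List α) : Prop :=
  IsRanking C r ∧
    ∀ c ∈ C, ∀ d ∈ C, scoreOf s C P d < scoreOf s C P c → rpos r c < rpos r d

/-- Score-`s` satisfies reinforcement:
if some ranking is selected on both `P` and `P'`, then the rankings selected on
the concatenated profile `P ++ P'` are exactly those selected on both. -/
theorem scoreRule_reinforcement [DecidableEq α] (s : ScoringSystem)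
    (C : Finset α) (P P' : List (List α))
    (hP : IsProfile C P) (hP' : IsProfile C P')
    (hne : ∃ r, ScoreSel s C P r ∧ ScoreSel s C P' r) :
    ∀ r, ScoreSel s C (P ++ P') r ↔ (ScoreSel s C P r ∧ ScoreSel s C P' r) := by
  have hadd : ∀ c, scoreOf s C (P ++ P') c = scoreOf s C P c + scoreOf s C P' c := by
    intro c; simp [scoreOf]
  obtain ⟨r0, ⟨hr0R, h0P⟩, ⟨_, h0P'⟩⟩ := hne
  have key : ∀ c ∈ C, ∀ d ∈ C, scoreOf s C P d < scoreOf s C P c →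
      scoreOf s C P' d ≤ scoreOf s C P' c := by
    intro c hc d hd h
    by_contra h'
    push_neg at h'
    exact absurd (h0P c hc d hd h) (not_lt.mpr (le_of_lt (h0P' d hd c hc h')))
  have key' : ∀ c ∈ C, ∀ d ∈ C, scoreOf s C P' d < scoreOf s C P' c →
      scoreOf s C P d ≤ scoreOf s C P c := by
    intro c hc d hd h
    by_contra h'
    push_neg at h'
    exact absurd (h0P' c hc d hd h) (not_lt.mpr (le_of_lt (h0P d hd c hc h')))
  intro r
  constructor
  · rintro ⟨hR, h⟩
    refine ⟨⟨hR, fun c hc d hd hlt => h c hc d hd ?_⟩,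
            ⟨hR, fun c hc d hd hlt => h c hc d hd ?_⟩⟩
    · rw [hadd, hadd]
      exact add_lt_add_of_lt_of_le hlt (key c hc d hd hlt)
    · rw [hadd, hadd]
      exact add_lt_add_of_le_of_lt (key' c hc d hd hlt) hlt
  · rintro ⟨⟨hR, h1⟩, ⟨_, h2⟩⟩
    refine ⟨hR, fun c hc d hd hlt => ?_⟩
    rw [hadd, hadd] at hlt
    rcases lt_or_ge (scoreOf s C P d) (scoreOf s C P c) with h | h
    · exact h1 c hc d hd h
    · exact h2 c hc d hd (by linarith)
end

section
/- Call an edge-weighted directed graph G = (V,A) bilevel if V can be partitioned into pairwise disjoint subsets C_1, …, C_s, D_1, …, D_s (some possibly empty) such that A = (C_1 × D_1) ∪ … ∪ (C_s × D_s) with every arc having weight 2. If G is bilevel, then there exists a ranking profile with exactly 2 voters over candidate set V whose weighted majority graph is G, i.e., for all distinct u, v ∈ V, w_{uv} = 2 if (u,v) ∈ A, w_{uv} = −2 if (v,u) ∈ A, and w_{uv} = 0 otherwise. -/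
open Finset

variable {α : Type*}

/-- The weighted-majority-graph weight `w_{uv}` of the profile `P`:
the number of voters preferring `u` to `v` minus the number preferring `v` to `u`. -/
def majWeight [DecidableEq α] (P : List (List α)) (u v : α) : ℤ :=
  (P.countP (fun r => decide (rpos r u < rpos r v)) : ℤ) -
    (P.countP (fun r => decide (rpos r v < rpos r u)) : ℤ)


variable {β : Type*}

def Before (l : List α) (u v : α) : Prop :=
  ∃ l1 l2 l3, l = l1 ++ u :: (l2 ++ v :: l3)

lemma Before.indexOf_lt [DecidableEq α] {l : List α} {u v : α} (h : Before l u v)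
    (hn : l.Nodup) : l.idxOf u < l.idxOf v := by
  obtain ⟨l1, l2, l3, rfl⟩ := h
  simp only [List.nodup_append, List.nodup_cons, List.mem_append, List.mem_cons] at hn
  obtain ⟨hn1, ⟨hu2, hn2⟩, hdis⟩ := hn
  have hu1 : u ∉ l1 := fun h => hdis u h u (by simp) rfl
  have hv1 : v ∉ l1 := fun h => hdis v h v (by simp) rfl
  have hvu : v ≠ u := fun h => hu2 (Or.inr (Or.inl h.symm))
  have hv2 : v ∉ l2 := fun h => hn2.2.2 v h v (by simp) rfl
  rw [List.idxOf_append_of_notMem hu1, List.idxOf_append_of_notMem hv1,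
    List.idxOf_cons_self, List.idxOf_cons_ne _ (Ne.symm hvu),
    List.idxOf_append_of_notMem hv2, List.idxOf_cons_self]
  omega

lemma before_of_indexOf_lt [DecidableEq α] :
    ∀ {l : List α} {u v : α}, u ∈ l → v ∈ l →
      l.idxOf u < l.idxOf v → Before l u v
  | a :: t, u, v, hu, hv, hlt => by
    by_cases hau : a = u
    · subst hau
      have hva : v ≠ a := by
        rintro rfl; simp [List.idxOf_cons_self] at hlt
      have hvt : v ∈ t := by
        rcases List.mem_cons.mp hv with h | h
        · exact absurd h hva
        · exact h
      obtain ⟨s, t', rfl⟩ := List.append_of_mem hvt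
      exact ⟨[], s, t', by simp⟩
    · have hva : a ≠ v := by
        rintro rfl
        simp [List.idxOf_cons_self] at hlt
      have hut : u ∈ t := by
        rcases List.mem_cons.mp hu with h | h
        · exact absurd h.symm hau
        · exact h
      have hvt : v ∈ t := by
        rcases List.mem_cons.mp hv with h | h
        · exact absurd h.symm hva
        · exact h
      have hlt' : t.idxOf u < t.idxOf v := by
        rw [List.idxOf_cons_ne _ hau, List.idxOf_cons_ne _ hva] at hlt
        omega
      obtain ⟨l1, l2, l3, rfl⟩ := before_of_indexOf_lt hut hvt hlt'
      exact ⟨a :: l1, l2, l3, by simp⟩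

lemma before_trichotomy [DecidableEq α] {l : List α} {u v : α}
    (hn : l.Nodup) (hu : u ∈ l) (hv : v ∈ l) (huv : u ≠ v) :
    Before l u v ∨ Before l v u := by
  have hne : l.idxOf u ≠ l.idxOf v := by
    intro h
    exact huv (List.idxOf_inj hu |>.mp h)
  rcases Nat.lt_or_ge (l.idxOf u) (l.idxOf v) with h | h
  · exact Or.inl (before_of_indexOf_lt hu hv h)
  · exact Or.inr (before_of_indexOf_lt hv hu (lt_of_le_of_ne h (Ne.symm hne)))

lemma Before.reverse {l : List α} {u v : α} (h : Before l u v) :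
    Before l.reverse v u := by
  obtain ⟨l1, l2, l3, rfl⟩ := h
  exact ⟨l3.reverse, l2.reverse, l1.reverse, by simp⟩

lemma before_append_of_mem {a b : List α} {u v : α} (hu : u ∈ a) (hv : v ∈ b) :
    Before (a ++ b) u v := by
  obtain ⟨s, t, rfl⟩ := List.append_of_mem hu
  obtain ⟨s', t', rfl⟩ := List.append_of_mem hv
  exact ⟨s, t ++ s', t', by simp⟩

lemma Before.append_right {a : List α} (b : List α) {u v : α} (h : Before a u v) :
    Before (a ++ b) u v := by
  obtain ⟨l1, l2, l3, rfl⟩ := h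
  exact ⟨l1, l2, l3 ++ b, by simp⟩

lemma Before.append_left (a : List α) {b : List α} {u v : α} (h : Before b u v) :
    Before (a ++ b) u v := by
  obtain ⟨l1, l2, l3, rfl⟩ := h
  exact ⟨a ++ l1, l2, l3, by simp⟩

lemma Before.flatMap {L : List β} {f : β → List α} {i j : β} {u v : α}
    (hij : Before L i j) (hu : u ∈ f i) (hv : v ∈ f j) :
    Before (L.flatMap f) u v := by
  obtain ⟨L1, L2, L3, rfl⟩ := hij
  obtain ⟨a1, a2, h1⟩ := List.append_of_mem hu
  obtain ⟨b1, b2, h2⟩ := List.append_of_mem hv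
  exact ⟨L1.flatMap f ++ a1, a2 ++ L2.flatMap f ++ b1, b2 ++ L3.flatMap f,
    by simp [h1, h2]⟩

lemma Before.flatMap_same {L : List β} {f : β → List α} {i : β} {u v : α}
    (hi : i ∈ L) (h : Before (f i) u v) : Before (L.flatMap f) u v := by
  obtain ⟨s, t, rfl⟩ := List.append_of_mem hi
  have : (s ++ i :: t).flatMap f = s.flatMap f ++ (f i ++ t.flatMap f) := by simp
  rw [this]
  exact Before.append_left _ ((h.append_right _))

/-- realizing bilevel graphs with two voters:
if the weighted digraph `(V, A)` (all arcs of weight `2`) is bilevel, then there is a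
ranking profile with exactly two voters over candidate set `V` whose weighted
majority graph is exactly the given graph. -/
theorem bilevel_two_voters [DecidableEq α] (V : Finset α) (A : Finset (α × α))
    (hbilevel : ∃ (s : ℕ) (Cp Dp : Fin s → Finset α),
      (∀ i j, i ≠ j → Disjoint (Cp i) (Cp j)) ∧
      (∀ i j, i ≠ j → Disjoint (Dp i) (Dp j)) ∧
      (∀ i j, Disjoint (Cp i) (Dp j)) ∧
      (Finset.univ.biUnion Cp ∪ Finset.univ.biUnion Dp = V) ∧
      (∀ u v : α, (u, v) ∈ A ↔ ∃ i, u ∈ Cp i ∧ v ∈ Dp i)) :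
    ∃ P : List (List α), P.length = 2 ∧ IsProfile V P ∧
      ∀ u ∈ V, ∀ v ∈ V, u ≠ v →
        majWeight P u v =
          (if (u, v) ∈ A then 2 else if (v, u) ∈ A then -2 else 0) := by
  classical
  obtain ⟨s, Cp, Dp, hCC, hDD, hCD, hV, hA⟩ := hbilevel
  set b1 : Fin s → List α := fun i => (Cp i).toList ++ (Dp i).toList with hb1
  set b2 : Fin s → List α :=
    fun i => (Cp i).toList.reverse ++ (Dp i).toList.reverse with hb2
  set r1 : List α := (List.finRange s).flatMap b1 with hr1
  set r2 : List α := (List.finRange s).reverse.flatMap b2 with hr2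
  have hmb1 : ∀ (i : Fin s) (x : α), x ∈ b1 i ↔ x ∈ Cp i ∨ x ∈ Dp i := by
    simp [hb1]
  have hmb2 : ∀ (i : Fin s) (x : α), x ∈ b2 i ↔ x ∈ Cp i ∨ x ∈ Dp i := by
    simp [hb2]
  have hdisjB : ∀ i j : Fin s, i ≠ j → ∀ x : α,
      (x ∈ Cp i ∨ x ∈ Dp i) → (x ∈ Cp j ∨ x ∈ Dp j) → False := by
    intro i j hij x hx hy
    rcases hx with h | h <;> rcases hy with h' | h'
    exacts [Finset.disjoint_left.mp (hCC i j hij) h h',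
      Finset.disjoint_left.mp (hCD i j) h h',
      Finset.disjoint_left.mp (hCD j i) h' h,
      Finset.disjoint_left.mp (hDD i j hij) h h']
  have huniq : ∀ {x : α} {k l : Fin s}, (x ∈ Cp k ∨ x ∈ Dp k) →
      (x ∈ Cp l ∨ x ∈ Dp l) → k = l := by
    intro x k l h h'
    by_contra hne
    exact hdisjB k l hne x h h'
  have hnotA : ∀ {x y : α} {k l : Fin s}, (x ∈ Cp k ∨ x ∈ Dp k) →
      (y ∈ Cp l ∨ y ∈ Dp l) → ¬(x ∈ Cp k ∧ y ∈ Dp l ∧ k = l) → (x, y) ∉ A := by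
    intro x y k l hx hy hcond hin
    obtain ⟨m, hxm, hym⟩ := (hA x y).mp hin
    obtain rfl : m = k := huniq (Or.inl hxm) hx
    have hl : m = l := huniq (Or.inr hym) hy
    exact hcond ⟨hxm, hl ▸ hym, hl⟩
  have hmem1 : ∀ x : α, x ∈ r1 ↔ x ∈ V := by
    intro x
    rw [← hV]
    simp [hr1, hb1, List.mem_flatMap, exists_or]
  have hmem2 : ∀ x : α, x ∈ r2 ↔ x ∈ V := by
    intro x
    rw [← hV]
    simp [hr2, hb2, List.mem_flatMap, exists_or]
  have hndb1 : ∀ i, (b1 i).Nodup := by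
    intro i
    rw [hb1]
    refine (List.nodup_append).mpr ⟨(Cp i).nodup_toList, (Dp i).nodup_toList, ?_⟩
    intro x hx _ hx' rfl
    exact Finset.disjoint_left.mp (hCD i i) (by simpa using hx) (by simpa using hx')
  have hndb2 : ∀ i, (b2 i).Nodup := by
    intro i
    rw [hb2]
    refine (List.nodup_append).mpr ⟨List.nodup_reverse.mpr (Cp i).nodup_toList, List.nodup_reverse.mpr (Dp i).nodup_toList, ?_⟩
    intro x hx _ hx' rfl
    exact Finset.disjoint_left.mp (hCD i i) (by simpa using hx) (by simpa using hx')
  have hnd1 : r1.Nodup := by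
    rw [hr1]
    refine List.nodup_flatMap.mpr ⟨fun i _ => hndb1 i, ?_⟩
    refine (List.nodup_finRange s).imp ?_
    intro i j hij x hx hx'
    exact hdisjB i j hij x ((hmb1 i x).mp hx) ((hmb1 j x).mp hx')
  have hnd2 : r2.Nodup := by
    rw [hr2]
    refine List.nodup_flatMap.mpr ⟨fun i _ => hndb2 i, ?_⟩
    refine ((List.nodup_reverse).mpr (List.nodup_finRange s)).imp ?_
    intro i j hij x hx hx'
    exact hdisjB i j hij x ((hmb2 i x).mp hx) ((hmb2 j x).mp hx')
  have hfin : ∀ i j : Fin s, i < j → Before (List.finRange s) i j := by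
    intro i j hij
    apply before_of_indexOf_lt (List.mem_finRange i) (List.mem_finRange j)
    simpa [List.idxOf_finRange] using hij
  have hfin2 : ∀ i j : Fin s, j < i → Before (List.finRange s).reverse i j :=
    fun i j h => (hfin j i h).reverse
  -- weight computations
  have w2 : ∀ x y : α, Before r1 x y → Before r2 x y →
      majWeight [r1, r2] x y = 2 := by
    intro x y h1 h2
    have a1 := h1.indexOf_lt hnd1
    have a2 := h2.indexOf_lt hnd2
    have n1 : ¬ (List.idxOf y r1 < List.idxOf x r1) := by omega
    have n2 : ¬ (List.idxOf y r2 < List.idxOf x r2) := by omega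
    simp only [majWeight, rpos, List.countP_cons, List.countP_nil,
      decide_eq_true_eq, Nat.add_lt_add_iff_right]
    rw [if_pos a1, if_pos a2, if_neg n1, if_neg n2]
    norm_num
  have w0 : ∀ x y : α, Before r1 x y → Before r2 y x →
      majWeight [r1, r2] x y = 0 := by
    intro x y h1 h2
    have a1 := h1.indexOf_lt hnd1
    have a2 := h2.indexOf_lt hnd2
    have n1 : ¬ (List.idxOf y r1 < List.idxOf x r1) := by omega
    have n2 : ¬ (List.idxOf x r2 < List.idxOf y r2) := by omega
    simp only [majWeight, rpos, List.countP_cons, List.countP_nil,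
      decide_eq_true_eq, Nat.add_lt_add_iff_right]
    rw [if_pos a1, if_neg n2, if_neg n1, if_pos a2]
    norm_num
  have wskew : ∀ x y : α, majWeight [r1, r2] x y = -majWeight [r1, r2] y x := by
    intro x y
    simp only [majWeight]
    ring
  refine ⟨[r1, r2], rfl, ?_, ?_⟩
  · intro r hr
    rcases List.mem_cons.mp hr with rfl | hr
    · exact ⟨hnd1, by ext x; simp [hmem1 x]⟩
    · rcases List.mem_cons.mp hr with rfl | hr
      · exact ⟨hnd2, by ext x; simp [hmem2 x]⟩
      · simp at hr
  · intro u hu v hv huv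
    have hloc : ∀ x ∈ V, ∃ i : Fin s, x ∈ Cp i ∨ x ∈ Dp i := by
      intro x hx
      rw [← hV] at hx
      rcases Finset.mem_union.mp hx with h | h
      · obtain ⟨i, _, hi⟩ := Finset.mem_biUnion.mp h
        exact ⟨i, Or.inl hi⟩
      · obtain ⟨i, _, hi⟩ := Finset.mem_biUnion.mp h
        exact ⟨i, Or.inr hi⟩
    obtain ⟨i, hui⟩ := hloc u hu
    obtain ⟨j, hvj⟩ := hloc v hv
    have hub1 : u ∈ b1 i := (hmb1 i u).mpr hui
    have hub2 : u ∈ b2 i := (hmb2 i u).mpr hui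
    have hvb1 : v ∈ b1 j := (hmb1 j v).mpr hvj
    have hvb2 : v ∈ b2 j := (hmb2 j v).mpr hvj
    rcases lt_trichotomy i j with hij | rfl | hij
    · -- different blocks, i < j : weight 0
      have B1 : Before r1 u v := (hfin i j hij).flatMap hub1 hvb1
      have B2 : Before r2 v u := (hfin2 j i hij).flatMap hvb2 hub2
      have hne : i ≠ j := ne_of_lt hij
      rw [if_neg (hnotA hui hvj (fun h => hne h.2.2)),
        if_neg (hnotA hvj hui (fun h => hne h.2.2.symm))]
      exact w0 u v B1 B2
    · -- same block
      have hiR : i ∈ List.finRange s := List.mem_finRange i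
      have hiR2 : i ∈ (List.finRange s).reverse := by simpa using hiR
      rcases hui with huC | huD <;> rcases hvj with hvC | hvD
      · -- both in Cp i : weight 0
        rcases before_trichotomy (Cp i).nodup_toList
            ((Finset.mem_toList).mpr huC) ((Finset.mem_toList).mpr hvC) huv with h | h
        · have B1 : Before r1 u v :=
            Before.flatMap_same hiR (h.append_right _)
          have B2 : Before r2 v u :=
            Before.flatMap_same hiR2 (h.reverse.append_right _)
          rw [if_neg (hnotA (Or.inl huC) (Or.inl hvC)
              (fun h => Finset.disjoint_left.mp (hCD i i) hvC (h.2.2 ▸ h.2.1))),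
            if_neg (hnotA (Or.inl hvC) (Or.inl huC)
              (fun h => Finset.disjoint_left.mp (hCD i i) huC (h.2.2 ▸ h.2.1)))]
          exact w0 u v B1 B2
        · have B1 : Before r1 v u :=
            Before.flatMap_same hiR (h.append_right _)
          have B2 : Before r2 u v :=
            Before.flatMap_same hiR2 (h.reverse.append_right _)
          rw [if_neg (hnotA (Or.inl huC) (Or.inl hvC)
              (fun h => Finset.disjoint_left.mp (hCD i i) hvC (h.2.2 ▸ h.2.1))),
            if_neg (hnotA (Or.inl hvC) (Or.inl huC)
              (fun h => Finset.disjoint_left.mp (hCD i i) huC (h.2.2 ▸ h.2.1)))]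
          rw [wskew u v, w0 v u B1 B2]
          norm_num
      · -- u in Cp i, v in Dp i : weight 2
        have B1 : Before r1 u v :=
          Before.flatMap_same hiR
            (before_append_of_mem ((Finset.mem_toList).mpr huC)
              ((Finset.mem_toList).mpr hvD))
        have B2 : Before r2 u v :=
          Before.flatMap_same hiR2
            (before_append_of_mem (by simpa using huC) (by simpa using hvD))
        rw [if_pos ((hA u v).mpr ⟨i, huC, hvD⟩)]
        exact w2 u v B1 B2
      · -- u in Dp i, v in Cp i : weight -2
        have B1 : Before r1 v u :=
          Before.flatMap_same hiR
            (before_append_of_mem ((Finset.mem_toList).mpr hvC)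
              ((Finset.mem_toList).mpr huD))
        have B2 : Before r2 v u :=
          Before.flatMap_same hiR2
            (before_append_of_mem (by simpa using hvC) (by simpa using huD))
        rw [if_neg (hnotA (Or.inr huD) (Or.inl hvC)
            (fun h => Finset.disjoint_left.mp (hCD i i) h.1 huD)),
          if_pos ((hA v u).mpr ⟨i, hvC, huD⟩)]
        rw [wskew u v, w2 v u B1 B2]
      · -- both in Dp i : weight 0
        rcases before_trichotomy (Dp i).nodup_toList
            ((Finset.mem_toList).mpr huD) ((Finset.mem_toList).mpr hvD) huv with h | h
        · have B1 : Before r1 u v :=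
            Before.flatMap_same hiR (h.append_left _)
          have B2 : Before r2 v u :=
            Before.flatMap_same hiR2 (h.reverse.append_left _)
          rw [if_neg (hnotA (Or.inr huD) (Or.inr hvD)
              (fun h => Finset.disjoint_left.mp (hCD i i) h.1 huD)),
            if_neg (hnotA (Or.inr hvD) (Or.inr huD)
              (fun h => Finset.disjoint_left.mp (hCD i i) h.1 hvD))]
          exact w0 u v B1 B2
        · have B1 : Before r1 v u :=
            Before.flatMap_same hiR (h.append_left _)
          have B2 : Before r2 u v :=
            Before.flatMap_same hiR2 (h.reverse.append_left _)
          rw [if_neg (hnotA (Or.inr huD) (Or.inr hvD)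
              (fun h => Finset.disjoint_left.mp (hCD i i) h.1 huD)),
            if_neg (hnotA (Or.inr hvD) (Or.inr huD)
              (fun h => Finset.disjoint_left.mp (hCD i i) h.1 hvD))]
          rw [wskew u v, w0 v u B1 B2]
          norm_num
    · -- different blocks, j < i : weight 0
      have B1 : Before r1 v u := (hfin j i hij).flatMap hvb1 hub1
      have B2 : Before r2 u v := (hfin2 i j hij).flatMap hub2 hvb2
      have hne : i ≠ j := ne_of_gt hij
      rw [if_neg (hnotA hui hvj (fun h => hne h.2.2)),
        if_neg (hnotA hvj hui (fun h => hne h.2.2.symm))]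
      rw [wskew u v, w0 v u B1 B2]
      norm_num
end

section
/- Let s be a scoring system, P a ranking profile over a finite candidate set C, d ∈ C a candidate, and k ∈ [|C|]. There exists a ranking ≻ ∈ Sequential-s-Winner(P) with pos(≻,d) = k if and only if there exists a subset C' ⊆ C∖{d} with |C'| = k−1 such that C' is an elimination set for (P, s) and d is an s-winner of the profile P restricted to C∖C'. -/
open Finset

variable {α : Type*}

/-- `E` is an elimination set for `(P, s)`: some ranking selected by
Sequential-`s`-Winner has exactly the candidates of `E` in its first `|E|` positions. -/
def IsElimSet [DecidableEq α] (s : ScoringSystem) (C : Finset α)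
    (P : List (List α)) (E : Finset α) : Prop :=
  ∃ r, SeqWinner s C P r ∧ (r.take E.card).toFinset = E

-- AUX LEMMAS START
lemma restrict_eq_self [DecidableEq α] {C : Finset α} {P : List (List α)}
    (hP : IsProfile C P) : restrictProfile C P = P := by
  unfold restrictProfile
  conv_rhs => rw [← List.map_id P]
  apply List.map_congr_left
  intro r hr
  apply List.filter_eq_self.mpr
  intro x hx
  simpa using (hP r hr).2 ▸ List.mem_toFinset.mpr hx

lemma restrict_restrict [DecidableEq α] {E F : Finset α} (h : E ⊆ F) (P : List (List α)) :
    restrictProfile E (restrictProfile F P) = restrictProfile E P := by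
  unfold restrictProfile
  rw [List.map_map]
  apply List.map_congr_left
  intro r _
  simp only [Function.comp, List.filter_filter]
  apply List.filter_congr
  intro x _
  by_cases hx : x ∈ E <;> simp [hx]
  exact h hx

lemma isProfile_restrict [DecidableEq α] {C E : Finset α} {P : List (List α)}
    (hP : IsProfile C P) (h : E ⊆ C) : IsProfile E (restrictProfile E P) := by
  intro r hr
  obtain ⟨q, hq, rfl⟩ := List.mem_map.mp hr
  refine ⟨(hP q hq).1.filter _, ?_⟩
  rw [List.toFinset_filter, (hP q hq).2]
  ext x
  simp only [Finset.mem_filter, decide_eq_true_eq]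
  exact ⟨fun hx => hx.2, fun hx => ⟨h hx, hx⟩⟩

lemma seq_isRanking [DecidableEq α] {s : ScoringSystem} :
    ∀ (r : List α) (C : Finset α) (P : List (List α)),
    SeqWinnerSel s r C P → IsRanking C r := by
  intro r
  induction r with
  | nil => intro C P h; exact ⟨List.nodup_nil, by simp [show C = ∅ from h]⟩
  | cons c r ih =>
    intro C P h
    obtain ⟨hw, h2⟩ := h
    obtain ⟨hn, hf⟩ := ih _ _ h2
    have hc : c ∉ r := by
      intro hc
      have := hf ▸ List.mem_toFinset.mpr hc
      simp at this
    exact ⟨List.nodup_cons.mpr ⟨hc, hn⟩,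
      by rw [List.toFinset_cons, hf, Finset.insert_erase hw.1]⟩

lemma seq_exists [DecidableEq α] (s : ScoringSystem) :
    ∀ (C : Finset α) (P : List (List α)), ∃ r, SeqWinnerSel s r C P := by
  intro C
  induction C using Finset.strongInduction with
  | _ C ih =>
    intro P
    rcases C.eq_empty_or_nonempty with rfl | hne
    · exact ⟨[], rfl⟩
    · obtain ⟨c, hc, hmax⟩ := Finset.exists_max_image C (scoreOf s C P) hne
      obtain ⟨r, hr⟩ := ih (C.erase c) (Finset.erase_ssubset hc) _
      exact ⟨c :: r, ⟨hc, hmax⟩, hr⟩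

lemma erase_sdiff_aux [DecidableEq α] (C : Finset α) (c : α) (l : List α) :
    C.erase c \ l.toFinset = C \ (c :: l).toFinset := by
  ext x
  simp only [Finset.mem_sdiff, Finset.mem_erase, List.toFinset_cons, Finset.mem_insert]
  tauto

lemma sdiff_cons_subset_erase [DecidableEq α] (C : Finset α) (c : α) (l : List α) :
    C \ (c :: l).toFinset ⊆ C.erase c := by
  intro x hx
  rw [← erase_sdiff_aux] at hx
  exact (Finset.mem_sdiff.mp hx).1

lemma seq_append [DecidableEq α] (s : ScoringSystem) :
    ∀ (l t : List α) (C : Finset α) (P : List (List α)), IsProfile C P →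
    SeqWinnerSel s (l ++ t) C P →
    SeqWinnerSel s t (C \ l.toFinset) (restrictProfile (C \ l.toFinset) P) := by
  intro l
  induction l with
  | nil =>
    intro t C P hP h
    simpa [restrict_eq_self hP] using h
  | cons c l ih =>
    intro t C P hP h
    obtain ⟨hw, h2⟩ := h
    have hP' := isProfile_restrict hP (Finset.erase_subset c C)
    have := ih t (C.erase c) _ hP' h2
    rw [erase_sdiff_aux, restrict_restrict (sdiff_cons_subset_erase C c l)] at this
    exact this

lemma seq_replace [DecidableEq α] (s : ScoringSystem) :
    ∀ (l t t' : List α) (C : Finset α) (P : List (List α)), IsProfile C P →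
    SeqWinnerSel s (l ++ t) C P →
    SeqWinnerSel s t' (C \ l.toFinset) (restrictProfile (C \ l.toFinset) P) →
    SeqWinnerSel s (l ++ t') C P := by
  intro l
  induction l with
  | nil =>
    intro t t' C P hP _ h'
    simpa [restrict_eq_self hP] using h'
  | cons c l ih =>
    intro t t' C P hP h h'
    obtain ⟨hw, h2⟩ := h
    have hP' := isProfile_restrict hP (Finset.erase_subset c C)
    rw [← erase_sdiff_aux,
        ← restrict_restrict (Finset.sdiff_subset (s := C.erase c) (t := l.toFinset)) P] at h'
    exact ⟨hw, ih t t' (C.erase c) _ hP' h2 h'⟩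

lemma indexOf_append_cons_self [DecidableEq α] {a : α} :
    ∀ {l : List α}, a ∉ l → ∀ t, (l ++ a :: t).idxOf a = l.length := by
  intro l
  induction l with
  | nil => intro _ t; simp
  | cons b l ih =>
    intro h t
    have hb : b ≠ a := fun e => h (e ▸ List.mem_cons_self ..)
    simp only [List.cons_append, List.idxOf_cons_ne _ hb, List.length_cons,
      ih (fun hm => h (List.mem_cons_of_mem _ hm)) t]

/-- some ranking selected by Sequential-`s`-Winner places `d` in
position `k` iff there is a `(k−1)`-element elimination set `C' ⊆ C∖{d}` such that `d`
is an `s`-winner of `P` restricted to `C∖C'`. -/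
theorem position_k_characterization [DecidableEq α] (s : ScoringSystem)
    (C : Finset α) (P : List (List α)) (hP : IsProfile C P)
    (d : α) (hd : d ∈ C) (k : ℕ) (hk1 : 1 ≤ k) (hk2 : k ≤ C.card) :
    (∃ r, SeqWinner s C P r ∧ rpos r d = k) ↔
      ∃ C' : Finset α, C' ⊆ C.erase d ∧ C'.card = k - 1 ∧ IsElimSet s C P C' ∧
        IsWinner s (C \ C') (restrictProfile (C \ C') P) d := by
  constructor
  · rintro ⟨r, hr, hpos⟩
    obtain ⟨hnd, hfin⟩ := seq_isRanking r C P hr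
    have hdr : d ∈ r := by rw [← List.mem_toFinset, hfin]; exact hd
    have hidx : r.idxOf d = k - 1 := by unfold rpos at hpos; omega
    have hklen : k - 1 < r.length := hidx ▸ List.idxOf_lt_length_iff.mpr hdr
    have hdrop : r.drop (k-1) = d :: r.drop k := by
      have h2 : List.idxOf d r < r.length := List.idxOf_lt_length_iff.mpr hdr
      have h3 := List.drop_eq_getElem_cons h2
      rw [List.getElem_idxOf, hidx] at h3
      have hk' : k - 1 + 1 = k := by omega
      rwa [hk'] at h3
    set l := r.take (k-1) with hl
    have hdl : d ∉ l := by
      have hdisj := List.disjoint_of_nodup_append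
        ((List.take_append_drop (k-1) r).symm ▸ hnd)
      intro hmem
      exact hdisj hmem (hdrop ▸ List.mem_cons_self (a := d) (l := r.drop k))
    have hlnd : l.Nodup := hnd.sublist (List.take_sublist _ _)
    have hllen : l.length = k - 1 := by
      rw [hl, List.length_take]
      omega
    have hcard : l.toFinset.card = k - 1 := by
      rw [List.toFinset_card_of_nodup hlnd, hllen]
    refine ⟨l.toFinset, ?_, hcard, ⟨r, hr, by rw [hcard]⟩, ?_⟩
    · intro x hx
      rw [List.mem_toFinset] at hx
      refine Finset.mem_erase.mpr ⟨fun e => hdl (e ▸ hx), ?_⟩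
      rw [← hfin]
      exact List.mem_toFinset.mpr ((List.take_sublist _ _).mem hx)
    · have := seq_append s l (r.drop (k-1)) C P hP
        (by rw [List.take_append_drop]; exact hr)
      rw [hdrop] at this
      exact this.1
  · rintro ⟨C', hsub, hcard, ⟨r, hr, htake⟩, hwin⟩
    obtain ⟨hnd, hfin⟩ := seq_isRanking r C P hr
    set l := r.take (k-1) with hl
    have hlfin : l.toFinset = C' := by rw [hl, ← hcard]; exact htake
    have hrlen : r.length = C.card := by
      rw [← hfin, List.toFinset_card_of_nodup hnd]
    have hllen : l.length = k - 1 := by rw [hl, List.length_take]; omega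
    have hdl : d ∉ l := by
      intro hmem
      have := hlfin ▸ List.mem_toFinset.mpr hmem
      exact (Finset.mem_erase.mp (hsub this)).1 rfl
    obtain ⟨r2, hr2⟩ := seq_exists s ((C \ C').erase d)
      (restrictProfile ((C \ C').erase d) (restrictProfile (C \ C') P))
    have hseq_tail : SeqWinnerSel s (d :: r2) (C \ C') (restrictProfile (C \ C') P) :=
      ⟨hwin, hr2⟩
    have happ := seq_replace s l (r.drop (k-1)) (d :: r2) C P hP
      (by rw [List.take_append_drop]; exact hr)
      (by rw [hlfin]; exact hseq_tail)
    refine ⟨l ++ d :: r2, happ, ?_⟩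
    unfold rpos
    rw [indexOf_append_cons_self hdl, hllen]
    omega
end

section
/- Sequential-Plurality-Winner copies majority rankings: for every ranking profile P = (≻_1, …, ≻_n) over a finite candidate set C, if there exists a ranking ≻ of C such that strictly more than n/2 of the voters report the ranking ≻, then Sequential-Plurality-Winner(P) = {≻}. -/
open Finset

variable {α : Type*}

/-- The Plurality scoring system `(1,0,…,0)`. -/
def pluralityS : ScoringSystem := fun _ i => if i = 1 then (1 : ℝ) else 0

lemma plur_nonneg (m i : ℕ) : (0:ℝ) ≤ pluralityS m i := by
  unfold pluralityS; split <;> norm_num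

lemma plur_le_one (m i : ℕ) : pluralityS m i ≤ 1 := by
  unfold pluralityS; split <;> norm_num

lemma score_ge_count [DecidableEq α] (C : Finset α) (P : List (List α)) (r : List α) (c : α)
    (hc : r.idxOf c = 0) :
    (P.count r : ℝ) ≤ scoreOf pluralityS C P c := by
  induction P with
  | nil => simp [scoreOf]
  | cons a P ih =>
    rw [List.count_cons]
    simp only [scoreOf, List.map_cons, List.sum_cons] at *
    have h0 : (0:ℝ) ≤ pluralityS C.card (rpos a c) := plur_nonneg _ _
    by_cases h : r = a
    · have h1 : pluralityS C.card (rpos a c) = 1 := by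
        simp [pluralityS, rpos, h ▸ hc]
      rw [h1, if_pos (beq_iff_eq.mpr h.symm)]
      push_cast
      linarith
    · rw [if_neg (by simp [Ne.symm h])]
      push_cast
      linarith

lemma score_le [DecidableEq α] (C : Finset α) (P : List (List α)) (r : List α) (d : α)
    (hd : r.idxOf d ≠ 0) :
    scoreOf pluralityS C P d + (P.count r : ℝ) ≤ P.length := by
  induction P with
  | nil => simp [scoreOf]
  | cons a P ih =>
    rw [List.count_cons, List.length_cons]
    simp only [scoreOf, List.map_cons, List.sum_cons] at *
    by_cases h : r = a
    · have h1 : pluralityS C.card (rpos a d) = 0 := by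
        simp [pluralityS, rpos, h ▸ hd]
      rw [h1, if_pos (beq_iff_eq.mpr h.symm)]
      push_cast
      linarith
    · have h1 : pluralityS C.card (rpos a d) ≤ 1 := plur_le_one _ _
      rw [if_neg (by simp [Ne.symm h])]
      push_cast
      linarith

lemma count_map_le {γ β : Type*} [BEq γ] [LawfulBEq γ] [BEq β] [LawfulBEq β]
    (f : γ → β) (P : List γ) (r : γ) :
    P.count r ≤ (P.map f).count (f r) := by
  induction P with
  | nil => simp
  | cons a P ih =>
    rw [List.count_cons, List.map_cons, List.count_cons]
    by_cases h : r = a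
    · rw [if_pos (beq_iff_eq.mpr h.symm), if_pos (beq_iff_eq.mpr (by rw [h]))]
      omega
    · rw [if_neg (by simp [Ne.symm h])]
      by_cases h2 : f r = f a
      · rw [if_pos (beq_iff_eq.mpr h2.symm)]; omega
      · rw [if_neg (by simp [Ne.symm h2])]; omega

lemma seq_aux [DecidableEq α] (r : List α) :
    ∀ (C : Finset α) (P : List (List α)), IsProfile C P → IsRanking C r →
      P.length < 2 * P.count r →
      ∀ q, SeqWinner pluralityS C P q ↔ q = r := by
  induction r with
  | nil =>
    intro C P hP hr hmaj q
    have hC : C = ∅ := by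
      obtain ⟨_, h2⟩ := hr; simpa using h2.symm
    subst hC
    constructor
    · intro hq
      cases q with
      | nil => rfl
      | cons c qrest =>
        exact absurd hq.1.1 (by simp)
    · rintro rfl
      show SeqWinnerSel pluralityS [] ∅ P
      rfl
  | cons c rest ih =>
    intro C P hP hr hmaj q
    obtain ⟨hnd, htf⟩ := hr
    have hcC : c ∈ C := by rw [← htf]; simp
    have hcount_pos : 0 < P.count ((c :: rest)) := by omega
    -- c is the unique plurality winner
    have hidx : (c :: rest).idxOf c = 0 := by simp
    have hscore_c : (P.count (c :: rest) : ℝ) ≤ scoreOf pluralityS C P c :=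
      score_ge_count C P _ c hidx
    have hwin : IsWinner pluralityS C P c := by
      refine ⟨hcC, fun d hd => ?_⟩
      by_cases hdc : d = c
      · subst hdc; exact le_refl _
      · have hdidx : (c :: rest).idxOf d ≠ 0 := by
          have hbd : (c == d) = false := beq_eq_false_iff_ne.mpr (Ne.symm hdc)
          rw [List.idxOf_cons]
          simp [hbd]
        have := score_le C P (c :: rest) d hdidx
        have hmaj' : (P.length : ℝ) < 2 * P.count (c :: rest) := by exact_mod_cast hmaj
        linarith
    have huniq : ∀ d, IsWinner pluralityS C P d → d = c := by
      intro d hdwin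
      by_contra hdc
      have hdidx : (c :: rest).idxOf d ≠ 0 := by
        have hbd : (c == d) = false := beq_eq_false_iff_ne.mpr (Ne.symm hdc)
        rw [List.idxOf_cons]
        simp [hbd]
      have h1 := score_le C P (c :: rest) d hdidx
      have h2 := hdwin.2 c hcC
      have hmaj' : (P.length : ℝ) < 2 * P.count (c :: rest) := by exact_mod_cast hmaj
      linarith
    -- setup for restricted problem
    have hcnr : c ∉ rest := by simp at hnd; exact hnd.1
    have hrestnd : rest.Nodup := (List.nodup_cons.mp hnd).2
    have htf' : rest.toFinset = C.erase c := by
      rw [← htf]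
      simp only [List.toFinset_cons]
      rw [Finset.erase_insert (by simpa using hcnr)]
    have hfilter : (c :: rest).filter (fun x => decide (x ∈ C.erase c)) = rest := by
      rw [List.filter_cons_of_neg (by simp)]
      apply List.filter_eq_self.mpr
      intro x hx
      simp only [decide_eq_true_eq, Finset.mem_erase]
      refine ⟨fun h => hcnr (h ▸ hx), ?_⟩
      rw [← htf]; simp [hx]
    have hP' : IsProfile (C.erase c) (restrictProfile (C.erase c) P) := by
      intro r' hr'
      simp only [restrictProfile, List.mem_map] at hr'
      obtain ⟨r0, hr0, rfl⟩ := hr'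
      obtain ⟨hnd0, htf0⟩ := hP r0 hr0
      refine ⟨hnd0.filter _, ?_⟩
      ext x
      simp only [List.mem_toFinset, List.mem_filter, decide_eq_true_eq]
      constructor
      · rintro ⟨_, h⟩; exact h
      · intro hx
        refine ⟨?_, hx⟩
        rw [← List.mem_toFinset, htf0]
        exact Finset.mem_of_mem_erase hx
    have hmaj' : (restrictProfile (C.erase c) P).length
        < 2 * (restrictProfile (C.erase c) P).count rest := by
      have hlen : (restrictProfile (C.erase c) P).length = P.length := by
        simp [restrictProfile]
      have hcnt : P.count (c :: rest) ≤ (restrictProfile (C.erase c) P).count rest := by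
        have h2 := count_map_le
          (fun r0 : List α => r0.filter (fun x => decide (x ∈ C.erase c))) P (c :: rest)
        rw [hfilter] at h2
        simpa only [restrictProfile] using h2
      omega
    have ihq := ih (C.erase c) (restrictProfile (C.erase c) P) hP'
      ⟨hrestnd, htf'⟩ hmaj'
    constructor
    · intro hq
      cases q with
      | nil =>
        have hC : C = ∅ := hq
        rw [hC] at hcC; simp at hcC
      | cons d qrest =>
        obtain ⟨hdwin, hsel⟩ := hq
        have hdc : d = c := huniq d hdwin
        subst hdc
        have := (ihq qrest).mp hsel
        rw [this]
    · rintro rfl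
      exact ⟨hwin, (ihq rest).mpr rfl⟩

/-- Sequential-Plurality-Winner copies majority rankings:
if strictly more than half of the voters of `P` report the ranking `r`, then
Sequential-Plurality-Winner selects exactly the ranking `r` on `P`. -/
theorem seqPluralityWinner_copies_majority [DecidableEq α] (C : Finset α)
    (P : List (List α)) (hP : IsProfile C P)
    (r : List α) (hr : IsRanking C r)
    (hmaj : P.length < 2 * P.count r) :
    ∀ q, SeqWinner pluralityS C P q ↔ q = r :=
  seq_aux r C P hP hr hmaj
end
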